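/- In the flat geodesic equations, setting Θ = 2θ + ρ where r = (p₁² + p₂²)/2, cos ρ = −(p₁² − p₂²)/(2r), sin ρ = p₁p₂/r (assuming (p₁,p₂) ≠ (0,0)), and ω = √(2r), the function Θ satisfies the simple pendulum equation Θ'' = −ω² sin Θ. -/

import Mathlib

open Real

/-- With `Θ = 2θ + ρ`, `r = (p₁² + p₂²)/2`, `cos ρ = −(p₁² − p₂²)/(2r)`,
`sin ρ = p₁p₂/r`, `ω = √(2r)`, a solution of the flat geodesic angular equation
satisfies the simple pendulum equation `Θ'' = −ω² sin Θ`. -/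
theorem flat_geodesic_angle_pendulum (θ : ℝ → ℝ) (p₁ p₂ r ρ ω : ℝ)
    (hθ : ContDiff ℝ ⊤ θ)
    (hode : ∀ t, iteratedDeriv 2 θ t =
      (p₁ * Real.cos (θ t) + p₂ * Real.sin (θ t)) *
        (p₁ * Real.sin (θ t) - p₂ * Real.cos (θ t)))
    (hp : (p₁, p₂) ≠ (0, 0))
    (hr : r = (p₁ ^ 2 + p₂ ^ 2) / 2)
    (hcos : Real.cos ρ = -(p₁ ^ 2 - p₂ ^ 2) / (2 * r))
    (hsin : Real.sin ρ = p₁ * p₂ / r)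
    (hω : ω = Real.sqrt (2 * r)) :
    ∀ t, iteratedDeriv 2 (fun s => 2 * θ s + ρ) t
      = -ω ^ 2 * Real.sin (2 * θ t + ρ) := by
  have hr0 : 0 < r := by
    have h : p₁ ≠ 0 ∨ p₂ ≠ 0 := by
      by_contra h
      push_neg at h
      exact hp (by simp [h.1, h.2])
    rcases h with h | h <;> · rw [hr]; positivity
  have hω2 : ω ^ 2 = 2 * r := by
    rw [hω, sq_sqrt (by linarith)]
  have hθ' : ContDiff ℝ (⊤ : ℕ∞) θ := hθ.of_le le_top
  have hd1 : Differentiable ℝ θ := hθ'.differentiable (by simp)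
  have hd2 : Differentiable ℝ (deriv θ) :=
    (hθ'.iterate_deriv 1).differentiable (by simp)
  intro t
  have key : iteratedDeriv 2 (fun s => 2 * θ s + ρ) t = 2 * iteratedDeriv 2 θ t := by
    have h1 : deriv (fun s => 2 * θ s + ρ) = fun s => 2 * deriv θ s := by
      funext s
      rw [deriv_add_const, deriv_const_mul _ (hd1 s)]
    rw [show (2 : ℕ) = 1 + 1 from rfl, iteratedDeriv_succ, iteratedDeriv_succ,
      iteratedDeriv_zero, iteratedDeriv_succ, iteratedDeriv_succ, iteratedDeriv_zero, h1,
      deriv_const_mul _ (hd2 t)]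
  rw [key, hode t, Real.sin_add, hcos, hsin, Real.sin_two_mul, Real.cos_two_mul, hω2]
  have hpy := Real.sin_sq_add_cos_sq (θ t)
  field_simp
  linear_combination (p₁ * p₂) * hpy
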